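/- arXiv:2212.07870 — 2 statements merged into one kernel-verified Lean document; each statement's English description precedes it below -/
import Mathlib

section
/- A DAG G is in ST_k (every vertex v has μ_s(v) ≤ k or μ_t(v) ≤ k) if and only if there is a partition V = V1 ∪ V2 with no edges from V2 to V1 such that every vertex of V1 has μ_s ≤ k (in G) and every vertex of V2 has μ_t ≤ k (in G). -/
open List

section Defs

variable {V : Type*} {α : Type*}

/-- A border of `t` is a proper prefix of `t` that is also a proper suffix of `t`. -/
def IsBorder (b t : List α) : Prop :=
  b <+: t ∧ b <:+ t ∧ b.length < t.length

/-- A directed graph (edge relation) is acyclic. -/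
def Acyclic (E : V → V → Prop) : Prop :=
  ∀ v, ¬ Relation.TransGen E v v

def IsSource (E : V → V → Prop) (v : V) : Prop := ∀ u, ¬ E u v

def IsSink (E : V → V → Prop) (v : V) : Prop := ∀ w, ¬ E v w

/-- A path is a nonempty list of vertices with consecutive edges. -/
def IsPath (E : V → V → Prop) (p : List V) : Prop := p ≠ [] ∧ p.Chain' E

/-- The edge `(u,v)` occurs (as a consecutive pair) on the path `p`. -/
def EdgeOn (p : List V) (u v : V) : Prop := ∃ l₁ l₂, p = l₁ ++ u :: v :: l₂

/-- A source-to-sink path. -/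
def SrcSinkPath (E : V → V → Prop) (p : List V) : Prop :=
  IsPath E p ∧ (∃ s, p.head? = some s ∧ IsSource E s) ∧ ∃ t, p.getLast? = some t ∧ IsSink E t

/-- `μ_s(v)`: the number of source-to-`v` paths. -/
noncomputable def muS (E : V → V → Prop) (v : V) : ℕ :=
  Set.ncard {p : List V | IsPath E p ∧ (∃ s, p.head? = some s ∧ IsSource E s) ∧ p.getLast? = some v}

/-- `μ_t(v)`: the number of `v`-to-sink paths. -/
noncomputable def muT (E : V → V → Prop) (v : V) : ℕ :=
  Set.ncard {p : List V | IsPath E p ∧ p.head? = some v ∧ ∃ t, p.getLast? = some t ∧ IsSink E t}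

/-- `μ(e)` for `e = (u,v)`: the number of source-to-sink paths containing the edge `(u,v)`. -/
noncomputable def muE (E : V → V → Prop) (u v : V) : ℕ :=
  Set.ncard {p : List V | SrcSinkPath E p ∧ EdgeOn p u v}

def NoIsolated (E : V → V → Prop) : Prop := ∀ v : V, (∃ u, E u v) ∨ ∃ w, E v w

/-- `G` is a `k`-funnel: every source-to-sink path contains a `k`-private edge. -/
def KFunnel (E : V → V → Prop) (k : ℕ) : Prop :=
  ∀ p, SrcSinkPath E p → ∃ u v, EdgeOn p u v ∧ muE E u v ≤ k

/-- `G` is a funnel: every source-to-sink path contains a private edge. -/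
def Funnel (E : V → V → Prop) : Prop :=
  ∀ p, SrcSinkPath E p → ∃ u v, EdgeOn p u v ∧ muE E u v = 1

/-- `B_v`: the set of lengths `i` such that some path ending at `v` spells `S[1..i]`
(with `0` included for the empty path). -/
def MatchSet (E : V → V → Prop) (ℓ : V → α) (S : List α) (v : V) : Set ℕ :=
  {i | i ≤ S.length ∧ (i = 0 ∨ ∃ p, IsPath E p ∧ p.getLast? = some v ∧ p.map ℓ = S.take i)}

end Defs

lemma chain'_transGen {V : Type*} {E : V → V → Prop} {l : List V} (h : l.Chain' E) :
    ∀ (i j : ℕ) (hij : i < j) (hj : j < l.length),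
      Relation.TransGen E (l.get ⟨i, by omega⟩) (l.get ⟨j, hj⟩) := by
  unfold List.Chain' at h; rw [List.isChain_iff_getElem] at h
  intro i j hij hj
  induction j with
  | zero => omega
  | succ n ih =>
    rcases Nat.lt_or_ge i n with h1 | h1
    · exact (ih h1 (by omega)).tail (h n (by omega))
    · have hin : i = n := by omega
      subst hin
      exact Relation.TransGen.single (h i (by omega))

lemma nodup_of_acyclic {V : Type*} {E : V → V → Prop} (hE : Acyclic E) {p : List V}
    (hp : p.Chain' E) : p.Nodup := by
  rw [List.nodup_iff_injective_get]
  intro i j hij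
  by_contra hne
  rcases Fin.lt_or_lt_of_ne hne with h | h
  · exact hE _ (hij ▸ chain'_transGen hp i j h j.isLt)
  · exact hE _ (hij ▸ chain'_transGen hp j i h i.isLt)

lemma muS_set_finite {V : Type*} [Fintype V] {E : V → V → Prop} (hE : Acyclic E) (v : V) :
    {p : List V | IsPath E p ∧ (∃ s, p.head? = some s ∧ IsSource E s) ∧
      p.getLast? = some v}.Finite := by
  apply (List.finite_length_le V (Fintype.card V)).subset
  rintro p ⟨⟨-, hch⟩, -, -⟩
  exact (nodup_of_acyclic hE hch).length_le_card

lemma muS_mono {V : Type*} [Fintype V] {E : V → V → Prop} (hE : Acyclic E) {u v : V}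
    (huv : E u v) : muS E u ≤ muS E v := by
  set Su := {p : List V | IsPath E p ∧ (∃ s, p.head? = some s ∧ IsSource E s) ∧
    p.getLast? = some u} with hSu
  set Sv := {p : List V | IsPath E p ∧ (∃ s, p.head? = some s ∧ IsSource E s) ∧
    p.getLast? = some v} with hSv
  have hinj : Function.Injective (fun p : List V => p ++ [v]) := by
    intro p q h
    simpa using congrArg List.dropLast h
  have himg : (fun p : List V => p ++ [v]) '' Su ⊆ Sv := by
    rintro _ ⟨p, ⟨⟨hne, hch⟩, ⟨s, hhd, hsrc⟩, hlast⟩, rfl⟩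
    refine ⟨⟨by simp, ?_⟩, ⟨s, ?_, hsrc⟩, by simp⟩
    · unfold List.Chain'; rw [List.isChain_append]
      refine ⟨hch, List.isChain_singleton v, ?_⟩
      intro x hx y hy
      simp only [List.head?_cons, Option.mem_def, Option.some.injEq] at hy
      rw [hlast] at hx
      simp only [Option.mem_def, Option.some.injEq] at hx
      subst hx; subst hy; exact huv
    · rw [List.head?_append_of_ne_nil _ hne]; exact hhd
  calc muS E u = Su.ncard := rfl
    _ = ((fun p : List V => p ++ [v]) '' Su).ncard :=
        (Set.ncard_image_of_injective _ hinj).symm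
    _ ≤ Sv.ncard := Set.ncard_le_ncard himg (muS_set_finite hE v)
    _ = muS E v := rfl

/-- `G ∈ ST_k` iff `V` partitions into `V₁` (all `μ_s ≤ k`) and `V₂` (all
`μ_t ≤ k`) with no edges from `V₂` to `V₁`. -/
theorem stmt13 {V : Type*} [Fintype V] (E : V → V → Prop) (hE : Acyclic E) (k : ℕ) :
    (∀ v, muS E v ≤ k ∨ muT E v ≤ k) ↔
      ∃ V₁ V₂ : Set V, V₁ ∪ V₂ = Set.univ ∧ Disjoint V₁ V₂ ∧
        (∀ u ∈ V₂, ∀ w ∈ V₁, ¬ E u w) ∧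
        (∀ v ∈ V₁, muS E v ≤ k) ∧ (∀ v ∈ V₂, muT E v ≤ k) := by
  constructor
  · intro h
    refine ⟨{v | muS E v ≤ k}, {v | ¬ muS E v ≤ k}, ?_, ?_, ?_, fun v hv => hv, ?_⟩
    · ext v; simpa using em (muS E v ≤ k)
    · rw [Set.disjoint_left]; intro v hv hv'; exact hv' hv
    · intro u hu w hw hwE
      exact hu (le_trans (muS_mono hE hwE) hw)
    · intro v hv
      rcases h v with h1 | h1
      · exact absurd h1 hv
      · exact h1
  · rintro ⟨V₁, V₂, hunion, -, -, h1, h2⟩ v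
    have : v ∈ V₁ ∪ V₂ := hunion ▸ Set.mem_univ v
    rcases this with hv | hv
    · exact Or.inl (h1 v hv)
    · exact Or.inr (h2 v hv)
end

section
/- Let G be a DAG and let w be the maximum over all source-to-sink paths P of min_{e ∈ P} μ(e) (the weight of a widest source-to-sink path under edge weights μ). Then w is the minimum k such that G is a k-funnel: G is a w-funnel and G is not a (w−1)-funnel. -/
open List

private lemma chain'_transGen_s14 {V : Type*} {E : V → V → Prop} :
    ∀ {l : List V} {v x : V}, List.Chain' E (v :: l) → x ∈ l → Relation.TransGen E v x := by
  intro l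
  induction l with
  | nil => intro v x _ h; simp at h
  | cons b l ih =>
    intro v x hc hx
    rw [List.Chain', List.isChain_cons_cons] at hc
    rcases List.mem_cons.1 hx with rfl | hx
    · exact Relation.TransGen.single hc.1
    · exact Relation.TransGen.head hc.1 (ih hc.2 hx)

private lemma chain'_nodup {V : Type*} {E : V → V → Prop} (hE : Acyclic E) :
    ∀ {p : List V}, p.Chain' E → p.Nodup := by
  intro p
  induction p with
  | nil => intro; exact List.nodup_nil
  | cons v l ih =>
    intro hc
    refine List.nodup_cons.2 ⟨fun hv => hE v (chain'_transGen_s14 hc hv), ih hc.tail⟩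

/-- The weight `w` of a widest source-to-sink path under edge weights `μ` is the
minimum `k` such that `G` is a `k`-funnel. -/
theorem stmt14 {V : Type*} [Fintype V] (E : V → V → Prop) (hE : Acyclic E) (w : ℕ)
    (h1 : ∃ p, SrcSinkPath E p ∧ (∃ a b, EdgeOn p a b) ∧
      ∀ u v, EdgeOn p u v → w ≤ muE E u v)
    (h2 : ∀ p, SrcSinkPath E p → ∃ u v, EdgeOn p u v ∧ muE E u v ≤ w) :
    KFunnel E w ∧ ¬ KFunnel E (w - 1) := by
  refine ⟨h2, fun hk => ?_⟩
  obtain ⟨p, hp, ⟨a, b, hab⟩, hmin⟩ := h1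
  obtain ⟨u, v, huv, hle⟩ := hk p hp
  have hfin : {q : List V | SrcSinkPath E q ∧ EdgeOn q u v}.Finite := by
    apply Set.Finite.subset (List.finite_length_le V (Fintype.card V))
    intro q hq
    exact (chain'_nodup hE hq.1.1.2).length_le_card
  have hpos : 0 < muE E u v :=
    (Set.ncard_pos hfin).2 ⟨p, hp, huv⟩
  have := hmin u v huv
  omega
end
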